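/- Let ρ_θ, θ ∈ Θ, be density matrices on a finite-dimensional Hilbert space whose real span is the full space of Hermitian matrices, and let Γ be a map from {ρ_θ} into density matrices such that for every ε > 0 and every 2-outcome POVM (M, I−M) there exists a 2-outcome POVM (M′, I−M′) with |tr Γ(ρ_θ)M − tr ρ_θ M′| < ε/2 for all θ. Then Γ extends to a (unique) linear, positive, trace preserving map on all Hermitian matrices. -/

import Mathlib

open Matrix Complex ComplexOrder

/-- A 2-outcome POVM element: `0 ≤ M ≤ I`. -/
def IsEffect {n : ℕ} (M : Matrix (Fin n) (Fin n) ℂ) : Prop :=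
  M.PosSemidef ∧ (1 - M).PosSemidef

lemma psd_trace_nonneg {k : ℕ} {A : Matrix (Fin k) (Fin k) ℂ} (hA : A.PosSemidef) :
    0 ≤ A.trace := by
  rw [Matrix.trace]
  refine Finset.sum_nonneg fun i _ => ?_
  have := hA.dotProduct_mulVec_nonneg (Pi.single i 1)
  simpa [Matrix.mulVec_single, dotProduct, Pi.single_apply,
    apply_ite (star : ℂ → ℂ), Matrix.diag] using this

open scoped MatrixOrder in
lemma psd_trace_mul_nonneg {k : ℕ} {A B : Matrix (Fin k) (Fin k) ℂ}
    (hA : A.PosSemidef) (hB : B.PosSemidef) : 0 ≤ (A * B).trace := by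
  obtain ⟨C, rfl⟩ := CStarAlgebra.nonneg_iff_eq_star_mul_self.mp hA.nonneg
  rw [Matrix.mul_assoc, Matrix.trace_mul_comm]
  exact psd_trace_nonneg (by simpa [Matrix.mul_assoc, Matrix.star_eq_conjTranspose] using hB.mul_mul_conjTranspose_same C)

lemma quad_vecMulVec {k : ℕ} (w x : Fin k → ℂ) :
    star x ⬝ᵥ (vecMulVec w (star w) *ᵥ x) = star x ⬝ᵥ w * (star w ⬝ᵥ x) := by
  simp [Matrix.vecMulVec_apply, Matrix.mulVec, dotProduct, Finset.mul_sum,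
    Finset.sum_mul]
  rw [Finset.sum_comm]
  exact Finset.sum_congr rfl fun i _ => Finset.sum_congr rfl fun j _ => by ring

lemma trace_mul_vecMulVec {k : ℕ} (B : Matrix (Fin k) (Fin k) ℂ) (w : Fin k → ℂ) :
    (B * vecMulVec w (star w)).trace = star w ⬝ᵥ (B *ᵥ w) := by
  simp [Matrix.trace, Matrix.mul_apply, Matrix.vecMulVec_apply, Matrix.diag,
    Matrix.mulVec, dotProduct, Finset.mul_sum]
  exact Finset.sum_congr rfl fun i _ => Finset.sum_congr rfl fun j _ => by ring

lemma herm_vecMulVec {k : ℕ} (w : Fin k → ℂ) : (vecMulVec w (star w)).IsHermitian := by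
  ext i j
  simp [Matrix.conjTranspose_apply, Matrix.vecMulVec_apply, mul_comm]

lemma star_dot_conj {k : ℕ} (w x : Fin k → ℂ) : star x ⬝ᵥ w = starRingEnd ℂ (star w ⬝ᵥ x) := by
  simp [dotProduct, map_sum, mul_comm]

lemma inner_piLp_equiv_symm' {k : ℕ} (x y : Fin k → ℂ) :
    inner ℂ ((WithLp.equiv 2 (Fin k → ℂ)).symm x) ((WithLp.equiv 2 (Fin k → ℂ)).symm y)
      = star x ⬝ᵥ y := by
  simp only [WithLp.equiv_symm_apply, EuclideanSpace.inner_toLp_toLp]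
  exact dotProduct_comm _ _

lemma dot_self_eq_norm_sq {k : ℕ} (v : Fin k → ℂ) :
    star v ⬝ᵥ v = ((‖(WithLp.equiv 2 (Fin k → ℂ)).symm v‖ ^ 2 : ℝ) : ℂ) := by
  rw [← inner_piLp_equiv_symm', inner_self_eq_norm_sq_to_K]
  norm_cast

lemma effect_vecMulVec {k : ℕ} (w : Fin k → ℂ) (hw : (star w ⬝ᵥ w).re ≤ 1) :
    IsEffect (vecMulVec w (star w)) := by
  constructor
  · refine Matrix.PosSemidef.of_dotProduct_mulVec_nonneg (herm_vecMulVec w) fun x => ?_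
    rw [quad_vecMulVec, star_dot_conj]
    exact star_mul_self_nonneg _
  · refine Matrix.PosSemidef.of_dotProduct_mulVec_nonneg
      ((Matrix.isHermitian_one).sub (herm_vecMulVec w)) fun x => ?_
    rw [Matrix.sub_mulVec, dotProduct_sub, Matrix.one_mulVec, quad_vecMulVec]
    set W := (WithLp.equiv 2 (Fin k → ℂ)).symm w with hWdef
    set X := (WithLp.equiv 2 (Fin k → ℂ)).symm x with hXdef
    have hWX : star w ⬝ᵥ x = inner ℂ W X := (inner_piLp_equiv_symm' w x).symm
    have hc : star x ⬝ᵥ w * (star w ⬝ᵥ x) = ((‖(inner ℂ W X : ℂ)‖ ^ 2 : ℝ) : ℂ) := by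
      rw [star_dot_conj, hWX, RCLike.conj_mul]
      norm_cast
    have hW1 : ‖W‖ ≤ 1 := by
      have := dot_self_eq_norm_sq w
      rw [this] at hw
      simp only [Complex.ofReal_re] at hw
      nlinarith [norm_nonneg W]
    have hcs : ‖(inner ℂ W X : ℂ)‖ ≤ ‖X‖ :=
      (norm_inner_le_norm W X).trans (by nlinarith [norm_nonneg X, norm_nonneg W])
    rw [dot_self_eq_norm_sq x, hc, ← Complex.ofReal_sub, Complex.zero_le_real, sub_nonneg]
    have h0 : (0:ℝ) ≤ ‖(inner ℂ W X : ℂ)‖ := norm_nonneg _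
    nlinarith

lemma eq_zero_of_quad_zero {k : ℕ} {B : Matrix (Fin k) (Fin k) ℂ}
    (h : ∀ v : Fin k → ℂ, star v ⬝ᵥ (B *ᵥ v) = 0) : B = 0 := by
  have h2 : ∀ x : EuclideanSpace ℂ (Fin k), (inner ℂ ((Matrix.toEuclideanLin B) x) x : ℂ) = 0 := by
    intro x
    have h3 : (Matrix.toEuclideanLin B) x = (WithLp.equiv 2 (Fin k → ℂ)).symm
        (B *ᵥ (WithLp.equiv 2 (Fin k → ℂ) x)) := by
      simp [Matrix.toEuclideanLin_apply]
    rw [h3]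
    have h4 : (inner ℂ ((WithLp.equiv 2 (Fin k → ℂ)).symm
          (B *ᵥ (WithLp.equiv 2 (Fin k → ℂ) x))) x : ℂ)
        = star (B *ᵥ (WithLp.equiv 2 (Fin k → ℂ) x)) ⬝ᵥ (WithLp.equiv 2 (Fin k → ℂ) x) := by
        rw [EuclideanSpace.inner_eq_star_dotProduct, dotProduct_comm]; rfl
    rw [h4, star_dot_conj _ (B *ᵥ _), h, map_zero]
  have h5 := (inner_map_self_eq_zero ((Matrix.toEuclideanLin B) :
      EuclideanSpace ℂ (Fin k) →ₗ[ℂ] EuclideanSpace ℂ (Fin k))).mp h2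
  have h6 : Matrix.toEuclideanLin B = Matrix.toEuclideanLin (0 : Matrix (Fin k) (Fin k) ℂ) := by
    rw [h5, map_zero]
  exact Matrix.toEuclideanLin.injective h6

/-- Rescale any vector to one with `re (star w ⬝ᵥ w) ≤ 1`, keeping track of the
quadratic form. -/
lemma quad_scale {k : ℕ} (B : Matrix (Fin k) (Fin k) ℂ) (v : Fin k → ℂ) :
    ∃ (w : Fin k → ℂ) (c : ℝ), 0 < c ∧ (star w ⬝ᵥ w).re ≤ 1 ∧
      star v ⬝ᵥ (B *ᵥ v) = (c : ℂ) * (star w ⬝ᵥ (B *ᵥ w)) := by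
  set s : ℝ := ‖(WithLp.equiv 2 (Fin k → ℂ)).symm v‖ ^ 2 with hs
  have hs0 : 0 ≤ s := by positivity
  have hs1 : 0 < s + 1 := by linarith
  set a : ℝ := (Real.sqrt (s + 1))⁻¹ with ha
  have hsq : Real.sqrt (s + 1) > 0 := Real.sqrt_pos.mpr hs1
  have ha0 : 0 < a := inv_pos.mpr hsq
  have ha2 : a ^ 2 = (s + 1)⁻¹ := by
    rw [ha, ← Real.sqrt_inv]
    exact Real.sq_sqrt (by positivity)
  have haa : a * a = (s + 1)⁻¹ := by rw [← ha2]; ring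
  have hsv : star (a • v) = a • star v := by simp
  refine ⟨a • v, s + 1, hs1, ?_, ?_⟩
  · have h9 : star (a • v) ⬝ᵥ (a • v) = ((a ^ 2 * s : ℝ) : ℂ) := by
      rw [hsv, smul_dotProduct, dotProduct_smul,
        dot_self_eq_norm_sq, ← hs, smul_smul, Complex.real_smul]
      push_cast
      ring
    rw [h9]
    simp only [Complex.ofReal_re]
    rw [ha2]
    rw [inv_mul_le_iff₀ hs1]
    linarith
  · rw [hsv, smul_dotProduct, Matrix.mulVec_smul,
      dotProduct_smul, smul_smul, Complex.real_smul]
    have h9 : ((s + 1 : ℝ) : ℂ) * ((a * a : ℝ) : ℂ) = 1 := by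
      rw [← Complex.ofReal_mul]
      norm_cast
      rw [haa, mul_inv_cancel₀ hs1.ne']
    rw [← mul_assoc, h9, one_mul]

lemma lc_mul_trace {k : ℕ} {Θ : Type*} (f : Θ → Matrix (Fin k) (Fin k) ℂ) (x : Θ →₀ ℝ)
    (N : Matrix (Fin k) (Fin k) ℂ) :
    ((Finsupp.linearCombination ℝ f x) * N).trace
      = ∑ θ ∈ x.support, x θ • ((f θ) * N).trace := by
  rw [Finsupp.linearCombination_apply, Finsupp.sum, Finset.sum_mul, Matrix.trace_sum]
  exact Finset.sum_congr rfl fun θ _ => by rw [Matrix.smul_mul, Matrix.trace_smul]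

lemma lc_trace {k : ℕ} {Θ : Type*} (f : Θ → Matrix (Fin k) (Fin k) ℂ) (x : Θ →₀ ℝ) :
    (Finsupp.linearCombination ℝ f x).trace = ∑ θ ∈ x.support, x θ • ((f θ)).trace := by
  rw [Finsupp.linearCombination_apply, Finsupp.sum, Matrix.trace_sum]
  exact Finset.sum_congr rfl fun θ _ => by rw [Matrix.trace_smul]

lemma lc_isHermitian {k : ℕ} {Θ : Type*} {f : Θ → Matrix (Fin k) (Fin k) ℂ}
    (hf : ∀ θ, (f θ).IsHermitian) (x : Θ →₀ ℝ) :
    (Finsupp.linearCombination ℝ f x).IsHermitian := by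
  rw [Finsupp.linearCombination_apply, Finsupp.sum]
  rw [Matrix.IsHermitian, Matrix.conjTranspose_sum]
  exact Finset.sum_congr rfl fun θ _ => by
    rw [Matrix.conjTranspose_smul, star_trivial, (hf θ).eq]

/-- If the density matrices `ρ_θ` span (over ℝ) all Hermitian matrices and `Γ` is a
2-statistical morphism on `{ρ_θ}`, then `Γ` extends uniquely to a linear, positive,
trace preserving map on all Hermitian matrices. -/
theorem statistical_morphism_extension {n m : ℕ} {Θ : Type*}
    (ρ : Θ → Matrix (Fin n) (Fin n) ℂ)
    (hρ : ∀ θ, (ρ θ).PosSemidef ∧ (ρ θ).trace = 1)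
    (hspan : ∀ A : Matrix (Fin n) (Fin n) ℂ, A.IsHermitian →
      A ∈ Submodule.span ℝ (Set.range ρ))
    (Γ : Θ → Matrix (Fin m) (Fin m) ℂ)
    (hΓ : ∀ θ, (Γ θ).PosSemidef ∧ (Γ θ).trace = 1)
    (hwd : ∀ θ θ', ρ θ = ρ θ' → Γ θ = Γ θ')
    (hmor : ∀ ε > (0 : ℝ), ∀ M : Matrix (Fin m) (Fin m) ℂ, IsEffect M →
      ∃ M' : Matrix (Fin n) (Fin n) ℂ, IsEffect M' ∧
        ∀ θ, ‖(Γ θ * M).trace - (ρ θ * M').trace‖ < ε / 2) :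
    ∃ Γ' : Matrix (Fin n) (Fin n) ℂ →ₗ[ℝ] Matrix (Fin m) (Fin m) ℂ,
      (∀ θ, Γ' (ρ θ) = Γ θ) ∧
      (∀ A : Matrix (Fin n) (Fin n) ℂ, A.PosSemidef → (Γ' A).PosSemidef) ∧
      (∀ A : Matrix (Fin n) (Fin n) ℂ, A.IsHermitian → (Γ' A).trace = A.trace) ∧
      (∀ Γ'' : Matrix (Fin n) (Fin n) ℂ →ₗ[ℝ] Matrix (Fin m) (Fin m) ℂ,
        (∀ θ, Γ'' (ρ θ) = Γ θ) →
        ∀ A : Matrix (Fin n) (Fin n) ℂ, A.IsHermitian → Γ'' A = Γ' A) := by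
  classical
  set hT : (Θ →₀ ℝ) →ₗ[ℝ] Matrix (Fin n) (Fin n) ℂ := Finsupp.linearCombination ℝ ρ with hhT
  set gT : (Θ →₀ ℝ) →ₗ[ℝ] Matrix (Fin m) (Fin m) ℂ := Finsupp.linearCombination ℝ Γ with hgT
  -- key approximation estimate
  have key : ∀ (x : Θ →₀ ℝ) (M : Matrix (Fin m) (Fin m) ℂ), IsEffect M → ∀ ε > (0:ℝ),
      ∃ M', IsEffect M' ∧ ‖(gT x * M).trace - (hT x * M').trace‖ < ε := by
    intro x M hM ε hε
    set S : ℝ := ∑ θ ∈ x.support, |x θ| with hS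
    have hS0 : 0 ≤ S := Finset.sum_nonneg fun θ _ => abs_nonneg _
    obtain ⟨M', hM', hd⟩ := hmor (ε / (S + 1)) (by positivity) M hM
    refine ⟨M', hM', ?_⟩
    rw [hhT, hgT, lc_mul_trace, lc_mul_trace, ← Finset.sum_sub_distrib]
    have step1 : ∀ θ ∈ x.support,
        x θ • (Γ θ * M).trace - x θ • (ρ θ * M').trace
          = x θ • ((Γ θ * M).trace - (ρ θ * M').trace) := fun θ _ => (smul_sub _ _ _).symm
    rw [Finset.sum_congr rfl step1]
    calc ‖∑ θ ∈ x.support, x θ • ((Γ θ * M).trace - (ρ θ * M').trace)‖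
        ≤ ∑ θ ∈ x.support, ‖x θ • ((Γ θ * M).trace - (ρ θ * M').trace)‖ :=
          norm_sum_le _ _
      _ ≤ ∑ θ ∈ x.support, |x θ| * (ε / (S + 1) / 2) := by
          refine Finset.sum_le_sum fun θ _ => ?_
          rw [Complex.real_smul, norm_mul, Complex.norm_real, Real.norm_eq_abs]
          exact mul_le_mul_of_nonneg_left (le_of_lt (hd θ)) (abs_nonneg _)
      _ = S * (ε / (S + 1) / 2) := by rw [← Finset.sum_mul]
      _ < ε := by
          have h1 : (0:ℝ) < S + 1 := by linarith
          have h2 : S / (S + 1) ≤ 1 := (div_le_one h1).mpr (by linarith)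
          have h3 : S * (ε / (S + 1) / 2) = (S / (S + 1)) * (ε / 2) := by ring
          nlinarith
  -- the kernel condition
  have hz : ∀ x : Θ →₀ ℝ, hT x = 0 → gT x = 0 := by
    intro x hx
    have hq0 : ∀ M : Matrix (Fin m) (Fin m) ℂ, IsEffect M → (gT x * M).trace = 0 := by
      intro M hM
      by_contra hne
      have ha : 0 < ‖(gT x * M).trace‖ := norm_pos_iff.mpr hne
      obtain ⟨M', _, hlt⟩ := key x M hM _ ha
      rw [hx] at hlt
      simp only [Matrix.zero_mul, Matrix.trace_zero, sub_zero] at hlt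
      exact absurd hlt (lt_irrefl _)
    refine eq_zero_of_quad_zero fun v => ?_
    obtain ⟨w, c, hc, hw1, heq⟩ := quad_scale (gT x) v
    have h1 : star w ⬝ᵥ (gT x *ᵥ w) = 0 := by
      rw [← trace_mul_vecMulVec]
      exact hq0 _ (effect_vecMulVec w hw1)
    rw [heq, h1, mul_zero]
  -- Hermiticity of image combinations
  have hherm : ∀ x : Θ →₀ ℝ, (gT x).IsHermitian :=
    fun x => lc_isHermitian (fun θ => (hΓ θ).1.1) x
  -- positivity
  have hpos : ∀ x : Θ →₀ ℝ, (hT x).PosSemidef → (gT x).PosSemidef := by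
    intro x hx
    have htr : ∀ M : Matrix (Fin m) (Fin m) ℂ, IsEffect M → 0 ≤ (gT x * M).trace := by
      intro M hM
      set t : ℂ := (gT x * M).trace with ht
      have htreal : star t = t := by
        rw [ht, ← Matrix.trace_conjTranspose, Matrix.conjTranspose_mul,
          (hherm x).eq, hM.1.1.eq, Matrix.trace_mul_comm]
      have him : t.im = 0 := by
        have h := congrArg Complex.im htreal
        rw [show (star t).im = -(t.im) from Complex.conj_im t] at h
        linarith
      have hre : 0 ≤ t.re := by
        by_contra hlt
        push_neg at hlt
        obtain ⟨M', hM', hd⟩ := key x M hM (-t.re / 2) (by linarith)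
        have hpsd : 0 ≤ (hT x * M').trace := psd_trace_mul_nonneg hx hM'.1
        have h5 : ((hT x * M').trace).re ≥ 0 := (Complex.le_def.mp hpsd).1
        have h6 : |(t - (hT x * M').trace).re| ≤ ‖t - (hT x * M').trace‖ :=
          Complex.abs_re_le_norm _
        rw [Complex.sub_re] at h6
        have h7 : |t.re - ((hT x * M').trace).re| < -t.re / 2 := lt_of_le_of_lt h6 hd
        rw [abs_lt] at h7
        linarith [h7.1]
      rw [Complex.le_def]
      constructor
      · simpa using hre
      · simp [him]
    rw [Matrix.posSemidef_iff_dotProduct_mulVec]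
    constructor
    · exact hherm x
    · intro v
      obtain ⟨w, c, hc, hw1, heq⟩ := quad_scale (gT x) v
      have h1 : 0 ≤ star w ⬝ᵥ (gT x *ᵥ w) := by
        rw [← trace_mul_vecMulVec]
        exact htr _ (effect_vecMulVec w hw1)
      rw [heq]
      exact mul_nonneg (by exact_mod_cast hc.le) h1
  -- construct the linear extension
  have hrange : LinearMap.range hT = Submodule.span ℝ (Set.range ρ) := by
    rw [hhT]
    exact Finsupp.range_linearCombination ℝ (v := ρ)
  have hle : LinearMap.ker hT ≤ LinearMap.ker gT := by
    intro x hx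
    rw [LinearMap.mem_ker] at hx ⊢
    exact hz x hx
  let q1 : ((Θ →₀ ℝ) ⧸ LinearMap.ker hT) →ₗ[ℝ] Matrix (Fin m) (Fin m) ℂ :=
    (LinearMap.ker hT).liftQ gT hle
  let e : ((Θ →₀ ℝ) ⧸ LinearMap.ker hT) ≃ₗ[ℝ] LinearMap.range hT :=
    LinearMap.quotKerEquivRange hT
  let kk : LinearMap.range hT →ₗ[ℝ] Matrix (Fin m) (Fin m) ℂ :=
    q1.comp e.symm.toLinearMap
  have hk : ∀ (x : Θ →₀ ℝ) (hmem : hT x ∈ LinearMap.range hT),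
      kk ⟨hT x, hmem⟩ = gT x := by
    intro x hmem
    have he : e (Submodule.Quotient.mk x) = ⟨hT x, hmem⟩ := by
      apply Subtype.ext
      simp [e, LinearMap.quotKerEquivRange]
    have : e.symm ⟨hT x, hmem⟩ = Submodule.Quotient.mk x := by
      rw [← he, LinearEquiv.symm_apply_apply]
    show q1 (e.symm ⟨hT x, hmem⟩) = gT x
    rw [this]
    exact Submodule.liftQ_apply _ _ _
  let π0 : Matrix (Fin n) (Fin n) ℂ →ₗ[ℝ] Matrix (Fin n) (Fin n) ℂ :=
    { toFun := fun A => (2:ℝ)⁻¹ • (A + Aᴴ)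
      map_add' := fun A B => by
        simp only [Matrix.conjTranspose_add, smul_add]
        abel
      map_smul' := fun r A => by
        simp only [Matrix.conjTranspose_smul, star_trivial, RingHom.id_apply, smul_add,
          smul_comm r] }
  have hπ0herm : ∀ A : Matrix (Fin n) (Fin n) ℂ, (π0 A).IsHermitian := by
    intro A
    show ((2:ℝ)⁻¹ • (A + Aᴴ)).IsHermitian
    rw [Matrix.IsHermitian, Matrix.conjTranspose_smul, star_trivial,
      Matrix.conjTranspose_add, Matrix.conjTranspose_conjTranspose, add_comm]
  have hπmem : ∀ A : Matrix (Fin n) (Fin n) ℂ, π0 A ∈ LinearMap.range hT := by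
    intro A
    rw [hrange]
    exact hspan _ (hπ0herm A)
  let π : Matrix (Fin n) (Fin n) ℂ →ₗ[ℝ] LinearMap.range hT :=
    LinearMap.codRestrict (LinearMap.range hT) π0 hπmem
  set Γ' : Matrix (Fin n) (Fin n) ℂ →ₗ[ℝ] Matrix (Fin m) (Fin m) ℂ := kk.comp π with hΓ'def
  have hΓ'eq : ∀ (A : Matrix (Fin n) (Fin n) ℂ), A.IsHermitian →
      ∀ x : Θ →₀ ℝ, hT x = A → Γ' A = gT x := by
    intro A hA x hx
    have hπ0A : π0 A = A := by
      show (2:ℝ)⁻¹ • (A + Aᴴ) = A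
      rw [hA.eq, ← two_smul ℝ A, smul_smul]
      norm_num
    have hπA : π A = ⟨hT x, LinearMap.mem_range_self hT x⟩ := by
      apply Subtype.ext
      show π0 A = hT x
      rw [hπ0A, hx]
    show kk (π A) = gT x
    rw [hπA]
    exact hk x _
  have hex : ∀ A : Matrix (Fin n) (Fin n) ℂ, A.IsHermitian → ∃ x : Θ →₀ ℝ, hT x = A := by
    intro A hA
    have h1 := hspan A hA
    rw [← hrange] at h1
    exact h1
  have hone : ∀ θ, Γ' (ρ θ) = Γ θ := by
    intro θ
    have hx : hT (Finsupp.single θ 1) = ρ θ := by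
      rw [hhT, Finsupp.linearCombination_single, one_smul]
    rw [hΓ'eq (ρ θ) (hρ θ).1.1 _ hx, hgT, Finsupp.linearCombination_single, one_smul]
  refine ⟨Γ', hone, ?_, ?_, ?_⟩
  · -- positivity
    intro A hA
    obtain ⟨x, hx⟩ := hex A hA.1
    rw [hΓ'eq A hA.1 x hx]
    exact hpos x (by rw [hx]; exact hA)
  · -- trace preservation
    intro A hA
    obtain ⟨x, hx⟩ := hex A hA
    rw [hΓ'eq A hA x hx]
    have h1 : (gT x).trace = ∑ θ ∈ x.support, x θ • (1 : ℂ) := by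
      rw [hgT, lc_trace]
      exact Finset.sum_congr rfl fun θ _ => by rw [(hΓ θ).2]
    have h2 : (hT x).trace = ∑ θ ∈ x.support, x θ • (1 : ℂ) := by
      rw [hhT, lc_trace]
      exact Finset.sum_congr rfl fun θ _ => by rw [(hρ θ).2]
    rw [h1, ← h2, hx]
  · -- uniqueness
    intro Γ'' hΓ'' A hA
    have hmem := hspan A hA
    refine Submodule.span_induction (p := fun B _ => Γ'' B = Γ' B) ?_ ?_ ?_ ?_ hmem
    · rintro B ⟨θ, rfl⟩
      rw [hΓ'' θ, hone θ]
    · show Γ'' 0 = Γ' 0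
      rw [map_zero, map_zero]
    · intro u v hu hv hpu hpv
      show Γ'' (u + v) = Γ' (u + v)
      rw [map_add, map_add, hpu, hpv]
    · intro a u hu hpu
      show Γ'' (a • u) = Γ' (a • u)
      rw [_root_.map_smul, _root_.map_smul, hpu]
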